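/- Let (c(t))_{t∈ℝ} be a complex-valued cosine function. Then for all s, t ∈ ℝ, (1 − c(s−t))(1 − c(s+t)) = (c(s) − c(t))². -/
import Mathlib

open Filter Topology

/-- A complex-valued cosine function: `c 0 = 1` and
`c (s+t) + c (s-t) = 2 * c s * c t` for all real `s, t`. -/
def IsScalarCosineFunction (c : ℝ → ℂ) : Prop :=
  c 0 = 1 ∧ ∀ s t : ℝ, c (s + t) + c (s - t) = 2 * c s * c t

theorem cosine_identity (c : ℝ → ℂ) (hc : IsScalarCosineFunction c) (s t : ℝ) :
    (1 - c (s - t)) * (1 - c (s + t)) = (c s - c t) ^ 2 := by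
  obtain ⟨h0, h⟩ := hc
  have h1 := h s t
  have h2 := h (s + t) (s - t)
  rw [show s + t + (s - t) = s + s by ring, show s + t - (s - t) = t + t by ring] at h2
  have h3 := h s s
  have h4 := h t t
  rw [show s - s = (0:ℝ) by ring, h0] at h3
  rw [show t - t = (0:ℝ) by ring, h0] at h4
  linear_combination (-1 : ℂ) * h1 - h2 / 2 + h3 / 2 + h4 / 2
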